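/- Let P be an almost convex polygon whose boundary consists of a sequence of pockets (concave chains between convex vertices), containing two adjacent pockets A = (p₁,…,p_k) and B = (p_k,…,p_l) sharing the convex vertex p_k. Let P' be the almost convex polygon obtained from P by swapping the pockets A and B. Then the number of crossing-free geometric graphs drawable inside P (using only diagonals, not boundary edges) equals the corresponding number for P'. -/

import Mathlib

open Finset

/-- An almost convex polygon is described combinatorially by the list `L` of the
numbers of reflex (inner) vertices of its consecutive pockets.  `pocketStart L p`
is the index of the first (convex) vertex of the `p`-th pocket. -/
def pocketStart (L : List ℕ) (p : ℕ) : ℕ := ((L.take p).map (· + 1)).sum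

/-- The number of vertices of the almost convex polygon with pocket sizes `L`. -/
def numVerts (L : List ℕ) : ℕ := pocketStart L L.length + 1

/-- Vertices `a ≤ b` lie on a common pocket (including its two convex endpoints). -/
def SamePocket (L : List ℕ) (a b : ℕ) : Prop :=
  ∃ p ∈ Finset.range L.length,
    pocketStart L p ≤ a ∧ b ≤ pocketStart L p + L.getD p 0 + 1

instance (L : List ℕ) (a b : ℕ) : Decidable (SamePocket L a b) := by
  unfold SamePocket; infer_instance

/-- An edge `(a, b)` is admissible inside the almost convex polygon: it is a
non-boundary chord (`a + 2 ≤ b < numVerts L`) whose endpoints do not lie on a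
common pocket (edges within a pocket leave the polygon). -/
def AdmissibleEdge (L : List ℕ) (e : ℕ × ℕ) : Prop :=
  e.1 + 2 ≤ e.2 ∧ e.2 < numVerts L ∧ ¬ SamePocket L e.1 e.2

instance (L : List ℕ) (e : ℕ × ℕ) : Decidable (AdmissibleEdge L e) := by
  unfold AdmissibleEdge; infer_instance

/-- Two chords with increasing endpoints cross iff their endpoints interleave. -/
def ChordsCross (e f : ℕ × ℕ) : Prop :=
  (e.1 < f.1 ∧ f.1 < e.2 ∧ e.2 < f.2) ∨ (f.1 < e.1 ∧ e.1 < f.2 ∧ f.2 < e.2)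

instance (e f : ℕ × ℕ) : Decidable (ChordsCross e f) := by
  unfold ChordsCross; infer_instance

/-- The number of crossing-free geometric graphs drawable inside the almost convex
polygon with pocket sizes `L`, using only interior chords (no boundary edges). -/
def pocketGraphCount (L : List ℕ) : ℕ :=
  (((range (numVerts L) ×ˢ range (numVerts L)).powerset).filter
    (fun E => (∀ e ∈ E, AdmissibleEdge L e) ∧
      ∀ e ∈ E, ∀ f ∈ E, ¬ ChordsCross e f)).card


/- ### omap -/
def omap (M N : Finset ℕ) (v : ℕ) : ℕ :=
  if h : N.card = M.card ∧ v ∈ M then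
    N.orderEmbOfFin h.1 ((M.orderIsoOfFin rfl).symm ⟨v, h.2⟩)
  else v

theorem omap_mem {M N : Finset ℕ} (hc : N.card = M.card) {v : ℕ} (hv : v ∈ M) :
    omap M N v ∈ N := by
  rw [omap, dif_pos ⟨hc, hv⟩]
  exact Finset.orderEmbOfFin_mem _ _ _

theorem omap_lt_iff {M N : Finset ℕ} (hc : N.card = M.card) {u v : ℕ}
    (hu : u ∈ M) (hv : v ∈ M) : omap M N u < omap M N v ↔ u < v := by
  rw [omap, dif_pos ⟨hc, hu⟩, omap, dif_pos ⟨hc, hv⟩]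
  rw [(N.orderEmbOfFin hc).lt_iff_lt, OrderIso.lt_iff_lt]
  exact Iff.rfl

theorem omap_omap {M N : Finset ℕ} (hc : N.card = M.card) {v : ℕ} (hv : v ∈ M) :
    omap N M (omap M N v) = v := by
  have h1 : omap M N v ∈ N := omap_mem hc hv
  rw [omap, dif_pos ⟨hc.symm, h1⟩]
  set i := (M.orderIsoOfFin rfl).symm ⟨v, hv⟩ with hi
  have hiv : M.orderEmbOfFin rfl i = v := by
    rw [← Finset.coe_orderIsoOfFin_apply, hi, OrderIso.apply_symm_apply]
  have h2 : omap M N v = N.orderEmbOfFin hc i := by rw [omap, dif_pos ⟨hc, hv⟩]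
  set j : Fin N.card := ⟨(i : ℕ), by rw [hc]; exact i.2⟩ with hj
  have h3 : omap M N v = N.orderEmbOfFin rfl j := by
    rw [h2]; exact Finset.orderEmbOfFin_eq_orderEmbOfFin_iff.2 rfl
  have h4 : (N.orderIsoOfFin rfl).symm ⟨omap M N v, h1⟩ = j := by
    apply (N.orderIsoOfFin rfl).injective.eq_iff.1
    rw [OrderIso.apply_symm_apply]
    apply Subtype.ext
    rw [Finset.coe_orderIsoOfFin_apply]
    exact h3
  rw [h4]
  refine Eq.trans ?_ hiv
  exact Finset.orderEmbOfFin_eq_orderEmbOfFin_iff.2 rfl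

theorem omap_image {M N : Finset ℕ} (hc : N.card = M.card) :
    M.image (omap M N) = N := by
  apply Finset.eq_of_subset_of_card_le
  · intro w hw
    obtain ⟨v, hv, rfl⟩ := Finset.mem_image.1 hw
    exact omap_mem hc hv
  · rw [hc, Finset.card_image_of_injOn]
    intro u hu v hv h
    have := omap_omap hc hu
    rw [h, omap_omap hc hv] at this
    exact this.symm

/- ### shapes and the bijection -/

def Ish (s t : ℕ) (e : ℕ × ℕ) : Prop := s ≤ e.1 ∧ e.2 ≤ t
def Lsh (s t : ℕ) (e : ℕ × ℕ) : Prop := e.1 < s ∧ s < e.2 ∧ e.2 < t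
def Rsh (s t : ℕ) (e : ℕ × ℕ) : Prop := s < e.1 ∧ e.1 < t ∧ t < e.2

instance (s t : ℕ) (e : ℕ × ℕ) : Decidable (Ish s t e) := by unfold Ish; infer_instance
instance (s t : ℕ) (e : ℕ × ℕ) : Decidable (Lsh s t e) := by unfold Lsh; infer_instance
instance (s t : ℕ) (e : ℕ × ℕ) : Decidable (Rsh s t e) := by unfold Rsh; infer_instance

def marks (s t : ℕ) (G : Finset (ℕ × ℕ)) : Finset ℕ :=
  ((G.filter (Lsh s t)).image Prod.snd) ∪ ((G.filter (Rsh s t)).image Prod.fst)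

def rmk (s t : ℕ) (G : Finset (ℕ × ℕ)) : Finset ℕ :=
  (marks s t G).image (fun v => s + t - v)

def mm (s t : ℕ) (G : Finset (ℕ × ℕ)) (v : ℕ) : ℕ :=
  omap (marks s t G) (rmk s t G) v

def phiE (s t : ℕ) (G : Finset (ℕ × ℕ)) (e : ℕ × ℕ) : ℕ × ℕ :=
  if Ish s t e then (s + t - e.2, s + t - e.1)
  else if Lsh s t e then (e.1, mm s t G e.2)
  else if Rsh s t e then (mm s t G e.1, e.2)
  else e

def Phi (s t : ℕ) (G : Finset (ℕ × ℕ)) : Finset (ℕ × ℕ) := G.image (phiE s t G)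

section basic
variable {s t : ℕ} {G : Finset (ℕ × ℕ)}

theorem mem_marks_iff {v : ℕ} :
    v ∈ marks s t G ↔ (∃ e ∈ G, Lsh s t e ∧ e.2 = v) ∨ (∃ e ∈ G, Rsh s t e ∧ e.1 = v) := by
  simp [marks, Finset.mem_union, Finset.mem_image, Finset.mem_filter, and_assoc]

theorem snd_mem_marks {e : ℕ × ℕ} (he : e ∈ G) (hL : Lsh s t e) : e.2 ∈ marks s t G :=
  mem_marks_iff.2 (Or.inl ⟨e, he, hL, rfl⟩)

theorem fst_mem_marks {e : ℕ × ℕ} (he : e ∈ G) (hR : Rsh s t e) : e.1 ∈ marks s t G :=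
  mem_marks_iff.2 (Or.inr ⟨e, he, hR, rfl⟩)

theorem marks_lt {v : ℕ} (h : v ∈ marks s t G) : s < v ∧ v < t := by
  rcases mem_marks_iff.1 h with ⟨e, _, hL, rfl⟩ | ⟨e, _, hR, rfl⟩
  · exact ⟨hL.2.1, hL.2.2⟩
  · exact ⟨hR.1, hR.2.1⟩

theorem rmk_card : (rmk s t G).card = (marks s t G).card := by
  apply Finset.card_image_of_injOn
  intro u hu v hv h
  have h1 := marks_lt hu
  have h2 := marks_lt hv
  have h' : s + t - u = s + t - v := h
  omega

theorem rmk_lt {v : ℕ} (h : v ∈ rmk s t G) : s < v ∧ v < t := by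
  obtain ⟨m, hm, rfl⟩ := Finset.mem_image.1 h
  have := marks_lt hm
  omega

theorem rmk_rmk : (rmk s t G).image (fun v => s + t - v) = marks s t G := by
  rw [rmk, Finset.image_image]
  rw [show ((fun v => s + t - v) ∘ (fun v => s + t - v)) = fun v : ℕ =>
    s + t - (s + t - v) from rfl]
  rw [Finset.image_congr (g := id), Finset.image_id]
  intro v hv
  have := marks_lt hv
  simp; omega

theorem mm_mem {v : ℕ} (hv : v ∈ marks s t G) : mm s t G v ∈ rmk s t G :=
  omap_mem rmk_card hv

theorem mm_lt_iff {u v : ℕ} (hu : u ∈ marks s t G) (hv : v ∈ marks s t G) :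
    mm s t G u < mm s t G v ↔ u < v :=
  omap_lt_iff rmk_card hu hv

theorem mm_bounds {v : ℕ} (hv : v ∈ marks s t G) : s < mm s t G v ∧ mm s t G v < t :=
  rmk_lt (mm_mem hv)

theorem mm_reflect_mem {v : ℕ} (hv : v ∈ marks s t G) :
    s + t - mm s t G v ∈ marks s t G := by
  have h := mm_mem hv
  obtain ⟨m, hm, hme⟩ := Finset.mem_image.1 h
  have := marks_lt hm
  rw [← hme]
  have : s + t - (s + t - m) = m := by omega
  rw [this]; exact hm

theorem phiE_I {e : ℕ × ℕ} (h : Ish s t e) :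
    phiE s t G e = (s + t - e.2, s + t - e.1) := by rw [phiE, if_pos h]

theorem phiE_L {e : ℕ × ℕ} (h : Lsh s t e) : phiE s t G e = (e.1, mm s t G e.2) := by
  have hni : ¬ Ish s t e := fun hi => absurd hi.1 (by have := h.1; omega)
  rw [phiE, if_neg hni, if_pos h]

theorem phiE_R {e : ℕ × ℕ} (h : Rsh s t e) : phiE s t G e = (mm s t G e.1, e.2) := by
  have hni : ¬ Ish s t e := fun hi => absurd hi.2 (by have := h.2.2; omega)
  have hnl : ¬ Lsh s t e := fun hl => absurd hl.1 (by have := h.1; omega)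
  rw [phiE, if_neg hni, if_neg hnl, if_pos h]

theorem phiE_O {e : ℕ × ℕ} (h1 : ¬ Ish s t e) (h2 : ¬ Lsh s t e) (h3 : ¬ Rsh s t e) :
    phiE s t G e = e := by rw [phiE, if_neg h1, if_neg h2, if_neg h3]

theorem phiE_I' {a b : ℕ} (h : Ish s t (a, b)) :
    phiE s t G (a, b) = (s + t - b, s + t - a) := phiE_I h

theorem phiE_L' {a b : ℕ} (h : Lsh s t (a, b)) :
    phiE s t G (a, b) = (a, mm s t G b) := phiE_L h

theorem phiE_R' {a b : ℕ} (h : Rsh s t (a, b)) :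
    phiE s t G (a, b) = (mm s t G a, b) := phiE_R h

theorem Ish_phiE {e : ℕ × ℕ} (he : e ∈ G) : Ish s t (phiE s t G e) ↔ Ish s t e := by
  obtain ⟨a, b⟩ := e
  by_cases h1 : Ish s t (a, b)
  · rw [phiE_I' h1]
    simp only [Ish] at h1 ⊢
    omega
  by_cases h2 : Lsh s t (a, b)
  · rw [phiE_L' h2]
    have hm2 : b ∈ marks s t G := snd_mem_marks he h2
    have hb := mm_bounds hm2
    simp only [Ish, Lsh] at h2 ⊢
    omega
  by_cases h3 : Rsh s t (a, b)
  · rw [phiE_R' h3]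
    have hm3 : a ∈ marks s t G := fst_mem_marks he h3
    have hb := mm_bounds hm3
    simp only [Ish, Rsh] at h3 ⊢
    omega
  · rw [phiE_O h1 h2 h3]

theorem Lsh_phiE {e : ℕ × ℕ} (he : e ∈ G) : Lsh s t (phiE s t G e) ↔ Lsh s t e := by
  obtain ⟨a, b⟩ := e
  by_cases h1 : Ish s t (a, b)
  · rw [phiE_I' h1]
    simp only [Ish, Lsh] at h1 ⊢
    omega
  by_cases h2 : Lsh s t (a, b)
  · rw [phiE_L' h2]
    have hm2 : b ∈ marks s t G := snd_mem_marks he h2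
    have hb := mm_bounds hm2
    simp only [Lsh] at h2 ⊢
    omega
  by_cases h3 : Rsh s t (a, b)
  · rw [phiE_R' h3]
    have hm3 : a ∈ marks s t G := fst_mem_marks he h3
    have hb := mm_bounds hm3
    simp only [Lsh, Rsh] at h3 ⊢
    omega
  · rw [phiE_O h1 h2 h3]

theorem Rsh_phiE {e : ℕ × ℕ} (he : e ∈ G) : Rsh s t (phiE s t G e) ↔ Rsh s t e := by
  obtain ⟨a, b⟩ := e
  by_cases h1 : Ish s t (a, b)
  · rw [phiE_I' h1]
    simp only [Ish, Rsh] at h1 ⊢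
    omega
  by_cases h2 : Lsh s t (a, b)
  · rw [phiE_L' h2]
    have hm2 : b ∈ marks s t G := snd_mem_marks he h2
    have hb := mm_bounds hm2
    simp only [Lsh, Rsh] at h2 ⊢
    omega
  by_cases h3 : Rsh s t (a, b)
  · rw [phiE_R' h3]
    have hm3 : a ∈ marks s t G := fst_mem_marks he h3
    have hb := mm_bounds hm3
    simp only [Rsh] at h3 ⊢
    omega
  · rw [phiE_O h1 h2 h3]

theorem marks_Phi : marks s t (Phi s t G) = rmk s t G := by
  have hL : (Phi s t G).filter (Lsh s t) = (G.filter (Lsh s t)).image (phiE s t G) := by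
    rw [Phi, Finset.filter_image]
    congr 1
    apply Finset.filter_congr
    intro e he
    exact Lsh_phiE he
  have hR : (Phi s t G).filter (Rsh s t) = (G.filter (Rsh s t)).image (phiE s t G) := by
    rw [Phi, Finset.filter_image]
    congr 1
    apply Finset.filter_congr
    intro e he
    exact Rsh_phiE he
  rw [marks, hL, hR, Finset.image_image, Finset.image_image]
  have e1 : (G.filter (Lsh s t)).image (Prod.snd ∘ phiE s t G)
      = ((G.filter (Lsh s t)).image Prod.snd).image (mm s t G) := by
    rw [Finset.image_image]
    apply Finset.image_congr
    intro e he
    rw [Finset.mem_coe, Finset.mem_filter] at he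
    simp only [Function.comp_apply, phiE_L he.2]
  have e2 : (G.filter (Rsh s t)).image (Prod.fst ∘ phiE s t G)
      = ((G.filter (Rsh s t)).image Prod.fst).image (mm s t G) := by
    rw [Finset.image_image]
    apply Finset.image_congr
    intro e he
    rw [Finset.mem_coe, Finset.mem_filter] at he
    simp only [Function.comp_apply, phiE_R he.2]
  rw [e1, e2, ← Finset.image_union]
  rw [show ((G.filter (Lsh s t)).image Prod.snd ∪ (G.filter (Rsh s t)).image Prod.fst)
    = marks s t G from rfl]
  exact omap_image rmk_card

theorem mm_Phi {v : ℕ} (hv : v ∈ marks s t G) :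
    mm s t (Phi s t G) (mm s t G v) = v := by
  have h1 : rmk s t (Phi s t G) = marks s t G := by
    rw [rmk, marks_Phi, rmk_rmk]
  show omap (marks s t (Phi s t G)) (rmk s t (Phi s t G)) (omap (marks s t G) (rmk s t G) v) = v
  rw [marks_Phi, h1]
  exact omap_omap rmk_card hv

theorem phiE_phiE {e : ℕ × ℕ} (he : e ∈ G) (hlt : e.1 < e.2) :
    phiE s t (Phi s t G) (phiE s t G e) = e := by
  obtain ⟨a, b⟩ := e
  simp only at hlt
  by_cases h1 : Ish s t (a, b)
  · rw [phiE_I' h1]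
    have h1' : Ish s t ((s + t - b, s + t - a) : ℕ × ℕ) := by
      simp only [Ish] at h1 ⊢; omega
    rw [phiE_I' h1']
    simp only [Ish] at h1
    have e1 : s + t - (s + t - a) = a := by omega
    have e2 : s + t - (s + t - b) = b := by omega
    rw [e1, e2]
  by_cases h2 : Lsh s t (a, b)
  · rw [phiE_L' h2]
    have hm : b ∈ marks s t G := snd_mem_marks he h2
    have hb := mm_bounds hm
    have h2' : Lsh s t ((a, mm s t G b) : ℕ × ℕ) := by
      simp only [Lsh] at h2 ⊢; omega
    rw [phiE_L' h2']
    rw [mm_Phi hm]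
  by_cases h3 : Rsh s t (a, b)
  · rw [phiE_R' h3]
    have hm : a ∈ marks s t G := fst_mem_marks he h3
    have hb := mm_bounds hm
    have h3' : Rsh s t ((mm s t G a, b) : ℕ × ℕ) := by
      simp only [Rsh] at h3 ⊢; omega
    rw [phiE_R' h3']
    rw [mm_Phi hm]
  · rw [phiE_O h1 h2 h3, phiE_O h1 h2 h3]

theorem Phi_Phi (h : ∀ e ∈ G, e.1 < e.2) : Phi s t (Phi s t G) = G := by
  rw [show Phi s t (Phi s t G) = (G.image (phiE s t G)).image (phiE s t (Phi s t G))
    from rfl]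
  rw [Finset.image_image]
  rw [Finset.image_congr (g := id), Finset.image_id]
  intro e he
  simp only [Function.comp_apply, id_eq]
  exact phiE_phiE he (h e he)

end basic

section valid
variable {s t n : ℕ} {P₁ P₂ : ℕ × ℕ → Prop} {G : Finset (ℕ × ℕ)}

theorem uncov (hcr : ∀ e ∈ G, ∀ f ∈ G, ¬ ChordsCross e f) {m : ℕ}
    (hm : m ∈ marks s t G) {e : ℕ × ℕ} (he : e ∈ G) (hIe : Ish s t e) :
    ¬ (e.1 < m ∧ m < e.2) := by
  intro hcon
  rcases mem_marks_iff.1 hm with ⟨f, hf, hLf, hf2⟩ | ⟨f, hf, hRf, hf1⟩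
  · refine hcr e he f hf ?_
    simp only [ChordsCross, Ish, Lsh] at hIe hLf ⊢
    omega
  · refine hcr e he f hf ?_
    simp only [ChordsCross, Ish, Rsh] at hIe hRf ⊢
    omega

theorem Phi_ok
    (hP₁ : ∀ e, P₁ e → e.1 + 2 ≤ e.2 ∧ e.2 < n)
    (htn : t < n)
    (hI : ∀ a b : ℕ, s ≤ a → a + 2 ≤ b → b ≤ t → (P₁ (a, b) ↔ P₂ (s + t - b, s + t - a)))
    (hL2 : ∀ a b : ℕ, a < s → s < b → b < t → P₂ (a, b))
    (hR2 : ∀ a b : ℕ, s < a → a < t → t < b → b < n → P₂ (a, b))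
    (hO : ∀ a b : ℕ, a < b → b < n →
      (b ≤ s ∨ t ≤ a ∨ (a ≤ s ∧ t ≤ b)) → (P₁ (a, b) ↔ P₂ (a, b)))
    (hsub : G ⊆ Finset.range n ×ˢ Finset.range n)
    (hadm : ∀ e ∈ G, P₁ e)
    (hcr : ∀ e ∈ G, ∀ f ∈ G, ¬ ChordsCross e f) :
    (Phi s t G ⊆ Finset.range n ×ˢ Finset.range n) ∧ (∀ e ∈ Phi s t G, P₂ e) ∧
      (∀ e ∈ Phi s t G, ∀ f ∈ Phi s t G, ¬ ChordsCross e f) := by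
  have hed : ∀ e ∈ G, e.1 + 2 ≤ e.2 ∧ e.2 < n := fun e he => hP₁ e (hadm e he)
  refine ⟨?_, ?_, ?_⟩
  · -- subset
    intro e' he'
    obtain ⟨e, he, rfl⟩ := Finset.mem_image.1 he'
    obtain ⟨a, b⟩ := e
    have hab : a + 2 ≤ b ∧ b < n := hed _ he
    simp only [Finset.mem_product, Finset.mem_range]
    by_cases h1 : Ish s t (a, b)
    · rw [phiE_I' h1]
      have h1a : s ≤ a := h1.1
      have h1b : b ≤ t := h1.2
      constructor <;> simp only <;> omega
    by_cases h2 : Lsh s t (a, b)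
    · rw [phiE_L' h2]
      have hm2 : b ∈ marks s t G := snd_mem_marks he h2
      have hb := mm_bounds hm2
      have h2a : a < s := h2.1
      have h2b : s < b := h2.2.1
      have h2c : b < t := h2.2.2
      constructor <;> simp only <;> omega
    by_cases h3 : Rsh s t (a, b)
    · rw [phiE_R' h3]
      have hm3 : a ∈ marks s t G := fst_mem_marks he h3
      have hb := mm_bounds hm3
      constructor <;> simp only <;> omega
    · rw [phiE_O h1 h2 h3]
      have := hsub he
      simp only [Finset.mem_product, Finset.mem_range] at this
      exact this
  · -- admissibility
    intro e' he'
    obtain ⟨e, he, rfl⟩ := Finset.mem_image.1 he'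
    obtain ⟨a, b⟩ := e
    have hab : a + 2 ≤ b ∧ b < n := hed _ he
    by_cases h1 : Ish s t (a, b)
    · rw [phiE_I' h1]
      have h1a : s ≤ a := h1.1
      have h1b : b ≤ t := h1.2
      exact (hI a b h1a hab.1 h1b).1 (hadm _ he)
    by_cases h2 : Lsh s t (a, b)
    · rw [phiE_L' h2]
      have hm2 : b ∈ marks s t G := snd_mem_marks he h2
      have hb := mm_bounds hm2
      have h2a : a < s := h2.1
      have h2b : s < b := h2.2.1
      have h2c : b < t := h2.2.2
      exact hL2 a _ h2a hb.1 hb.2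
    by_cases h3 : Rsh s t (a, b)
    · rw [phiE_R' h3]
      have hm3 : a ∈ marks s t G := fst_mem_marks he h3
      have hb := mm_bounds hm3
      have h3a : s < a := h3.1
      have h3b : a < t := h3.2.1
      have h3c : t < b := h3.2.2
      exact hR2 _ b hb.1 hb.2 h3c hab.2
    · rw [phiE_O h1 h2 h3]
      have ho : b ≤ s ∨ t ≤ a ∨ (a ≤ s ∧ t ≤ b) := by
        simp only [Ish, Lsh, Rsh] at h1 h2 h3
        omega
      exact (hO a b (by omega) hab.2 ho).1 (hadm _ he)
  · -- non-crossing
    intro e' he' f' hf'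
    obtain ⟨e, he, rfl⟩ := Finset.mem_image.1 he'
    obtain ⟨f, hf, rfl⟩ := Finset.mem_image.1 hf'
    obtain ⟨a, b⟩ := e
    obtain ⟨c, d⟩ := f
    have hab : a + 2 ≤ b ∧ b < n := hed _ he
    have hcd : c + 2 ≤ d ∧ d < n := hed _ hf
    have hcr0 : ¬ ChordsCross (a, b) (c, d) := hcr _ he _ hf
    simp only [ChordsCross] at hcr0
    by_cases h1 : Ish s t (a, b)
    · rw [phiE_I' h1]
      have h1a : s ≤ a := h1.1
      have h1b : b ≤ t := h1.2
      by_cases k1 : Ish s t (c, d)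
      · rw [phiE_I' k1]
        have k1a : s ≤ c := k1.1
        have k1b : d ≤ t := k1.2
        simp only [ChordsCross]
        omega
      by_cases k2 : Lsh s t (c, d)
      · rw [phiE_L' k2]
        have hmd : d ∈ marks s t G := snd_mem_marks hf k2
        have hbd := mm_bounds hmd
        have hrefl : s + t - mm s t G d ∈ marks s t G := mm_reflect_mem hmd
        have hud : ¬ (a < s + t - mm s t G d ∧ s + t - mm s t G d < b) :=
          uncov hcr hrefl he h1
        have k2a : c < s := k2.1
        have k2b : s < d := k2.2.1
        have k2c : d < t := k2.2.2
        simp only [ChordsCross]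
        omega
      by_cases k3 : Rsh s t (c, d)
      · rw [phiE_R' k3]
        have hmc : c ∈ marks s t G := fst_mem_marks hf k3
        have hbc := mm_bounds hmc
        have hrefl : s + t - mm s t G c ∈ marks s t G := mm_reflect_mem hmc
        have huc : ¬ (a < s + t - mm s t G c ∧ s + t - mm s t G c < b) :=
          uncov hcr hrefl he h1
        have k3a : s < c := k3.1
        have k3b : c < t := k3.2.1
        have k3c : t < d := k3.2.2
        simp only [ChordsCross]
        omega
      · rw [phiE_O k1 k2 k3]
        have ho : d ≤ s ∨ t ≤ c ∨ (c ≤ s ∧ t ≤ d) := by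
          simp only [Ish, Lsh, Rsh] at k1 k2 k3
          omega
        simp only [ChordsCross]
        omega
    by_cases h2 : Lsh s t (a, b)
    · rw [phiE_L' h2]
      have hmb : b ∈ marks s t G := snd_mem_marks he h2
      have hbb := mm_bounds hmb
      have h2a : a < s := h2.1
      have h2b : s < b := h2.2.1
      have h2c : b < t := h2.2.2
      by_cases k1 : Ish s t (c, d)
      · rw [phiE_I' k1]
        have k1a : s ≤ c := k1.1
        have k1b : d ≤ t := k1.2
        have hrefl : s + t - mm s t G b ∈ marks s t G := mm_reflect_mem hmb
        have hub : ¬ (c < s + t - mm s t G b ∧ s + t - mm s t G b < d) :=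
          uncov hcr hrefl hf k1
        simp only [ChordsCross]
        omega
      by_cases k2 : Lsh s t (c, d)
      · rw [phiE_L' k2]
        have hmd : d ∈ marks s t G := snd_mem_marks hf k2
        have hbd := mm_bounds hmd
        have hi1 : mm s t G b < mm s t G d ↔ b < d := mm_lt_iff hmb hmd
        have hi2 : mm s t G d < mm s t G b ↔ d < b := mm_lt_iff hmd hmb
        have k2a : c < s := k2.1
        have k2b : s < d := k2.2.1
        have k2c : d < t := k2.2.2
        simp only [ChordsCross]
        omega
      by_cases k3 : Rsh s t (c, d)
      · rw [phiE_R' k3]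
        have hmc : c ∈ marks s t G := fst_mem_marks hf k3
        have hbc := mm_bounds hmc
        have hi1 : mm s t G b < mm s t G c ↔ b < c := mm_lt_iff hmb hmc
        have hi2 : mm s t G c < mm s t G b ↔ c < b := mm_lt_iff hmc hmb
        have k3a : s < c := k3.1
        have k3b : c < t := k3.2.1
        have k3c : t < d := k3.2.2
        simp only [ChordsCross]
        omega
      · rw [phiE_O k1 k2 k3]
        have ho : d ≤ s ∨ t ≤ c ∨ (c ≤ s ∧ t ≤ d) := by
          simp only [Ish, Lsh, Rsh] at k1 k2 k3
          omega
        simp only [ChordsCross]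
        omega
    by_cases h3 : Rsh s t (a, b)
    · rw [phiE_R' h3]
      have hma : a ∈ marks s t G := fst_mem_marks he h3
      have hba := mm_bounds hma
      have h3a : s < a := h3.1
      have h3b : a < t := h3.2.1
      have h3c : t < b := h3.2.2
      by_cases k1 : Ish s t (c, d)
      · rw [phiE_I' k1]
        have k1a : s ≤ c := k1.1
        have k1b : d ≤ t := k1.2
        have hrefl : s + t - mm s t G a ∈ marks s t G := mm_reflect_mem hma
        have hua : ¬ (c < s + t - mm s t G a ∧ s + t - mm s t G a < d) :=
          uncov hcr hrefl hf k1
        simp only [ChordsCross]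
        omega
      by_cases k2 : Lsh s t (c, d)
      · rw [phiE_L' k2]
        have hmd : d ∈ marks s t G := snd_mem_marks hf k2
        have hbd := mm_bounds hmd
        have hi1 : mm s t G a < mm s t G d ↔ a < d := mm_lt_iff hma hmd
        have hi2 : mm s t G d < mm s t G a ↔ d < a := mm_lt_iff hmd hma
        have k2a : c < s := k2.1
        have k2b : s < d := k2.2.1
        have k2c : d < t := k2.2.2
        simp only [ChordsCross]
        omega
      by_cases k3 : Rsh s t (c, d)
      · rw [phiE_R' k3]
        have hmc : c ∈ marks s t G := fst_mem_marks hf k3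
        have hbc := mm_bounds hmc
        have hi1 : mm s t G a < mm s t G c ↔ a < c := mm_lt_iff hma hmc
        have hi2 : mm s t G c < mm s t G a ↔ c < a := mm_lt_iff hmc hma
        have k3a : s < c := k3.1
        have k3b : c < t := k3.2.1
        have k3c : t < d := k3.2.2
        simp only [ChordsCross]
        omega
      · rw [phiE_O k1 k2 k3]
        have ho : d ≤ s ∨ t ≤ c ∨ (c ≤ s ∧ t ≤ d) := by
          simp only [Ish, Lsh, Rsh] at k1 k2 k3
          omega
        simp only [ChordsCross]
        omega
    · rw [phiE_O h1 h2 h3]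
      have ho : b ≤ s ∨ t ≤ a ∨ (a ≤ s ∧ t ≤ b) := by
        simp only [Ish, Lsh, Rsh] at h1 h2 h3
        omega
      by_cases k1 : Ish s t (c, d)
      · rw [phiE_I' k1]
        have k1a : s ≤ c := k1.1
        have k1b : d ≤ t := k1.2
        simp only [ChordsCross]
        omega
      by_cases k2 : Lsh s t (c, d)
      · rw [phiE_L' k2]
        have hmd : d ∈ marks s t G := snd_mem_marks hf k2
        have hbd := mm_bounds hmd
        have k2a : c < s := k2.1
        have k2b : s < d := k2.2.1
        have k2c : d < t := k2.2.2
        simp only [ChordsCross]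
        omega
      by_cases k3 : Rsh s t (c, d)
      · rw [phiE_R' k3]
        have hmc : c ∈ marks s t G := fst_mem_marks hf k3
        have hbc := mm_bounds hmc
        have k3a : s < c := k3.1
        have k3b : c < t := k3.2.1
        have k3c : t < d := k3.2.2
        simp only [ChordsCross]
        omega
      · rw [phiE_O k1 k2 k3]
        have ho2 : d ≤ s ∨ t ≤ c ∨ (c ≤ s ∧ t ≤ d) := by
          simp only [Ish, Lsh, Rsh] at k1 k2 k3
          omega
        simp only [ChordsCross]
        omega

end valid

theorem count_le {s t n : ℕ} {P₁ P₂ : ℕ × ℕ → Prop} [DecidablePred P₁] [DecidablePred P₂]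
    (hP₁ : ∀ e, P₁ e → e.1 + 2 ≤ e.2 ∧ e.2 < n)
    (htn : t < n)
    (hI : ∀ a b : ℕ, s ≤ a → a + 2 ≤ b → b ≤ t → (P₁ (a, b) ↔ P₂ (s + t - b, s + t - a)))
    (hL2 : ∀ a b : ℕ, a < s → s < b → b < t → P₂ (a, b))
    (hR2 : ∀ a b : ℕ, s < a → a < t → t < b → b < n → P₂ (a, b))
    (hO : ∀ a b : ℕ, a < b → b < n →
      (b ≤ s ∨ t ≤ a ∨ (a ≤ s ∧ t ≤ b)) → (P₁ (a, b) ↔ P₂ (a, b))) :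
    (((Finset.range n ×ˢ Finset.range n).powerset).filter
      (fun E => (∀ e ∈ E, P₁ e) ∧ ∀ e ∈ E, ∀ f ∈ E, ¬ ChordsCross e f)).card ≤
    (((Finset.range n ×ˢ Finset.range n).powerset).filter
      (fun E => (∀ e ∈ E, P₂ e) ∧ ∀ e ∈ E, ∀ f ∈ E, ¬ ChordsCross e f)).card := by
  apply Finset.card_le_card_of_injOn (Phi s t)
  · intro G hG
    rw [Finset.mem_coe, Finset.mem_filter, Finset.mem_powerset] at hG ⊢
    have h := Phi_ok hP₁ htn hI hL2 hR2 hO hG.1 hG.2.1 hG.2.2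
    exact ⟨h.1, h.2.1, h.2.2⟩
  · intro G1 h1 G2 h2 heq
    rw [Finset.mem_coe, Finset.mem_filter] at h1 h2
    have e1 : ∀ e ∈ G1, e.1 < e.2 := fun e he => by
      have := hP₁ e (h1.2.1 e he); omega
    have e2 : ∀ e ∈ G2, e.1 < e.2 := fun e he => by
      have := hP₁ e (h2.2.1 e he); omega
    calc G1 = Phi s t (Phi s t G1) := (Phi_Phi e1).symm
      _ = Phi s t (Phi s t G2) := by rw [heq]
      _ = G2 := Phi_Phi e2

/- ### pocketStart lemmas -/

theorem ps_mono (L : List ℕ) {p q : ℕ} (h : p ≤ q) :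
    pocketStart L p ≤ pocketStart L q := by
  have h2 : L.take q = L.take p ++ (L.take q).drop p := by
    rw [show L.take p = (L.take q).take p by rw [List.take_take, Nat.min_eq_left h]]
    rw [List.take_append_drop]
  rw [pocketStart, pocketStart, h2, List.map_append, List.sum_append]
  omega

theorem ps_step (L : List ℕ) {p : ℕ} (h : p < L.length) :
    pocketStart L (p + 1) = pocketStart L p + (L.getD p 0 + 1) := by
  have h2 : L.take (p + 1) = L.take p ++ [L.getD p 0] := by
    rw [List.take_succ]
    congr 1
    simp [List.getD_eq_getElem?_getD, List.getElem?_eq_getElem h]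
  rw [pocketStart, pocketStart, h2, List.map_append, List.sum_append]
  simp

theorem ps_low (A C : List ℕ) {p : ℕ} (hp : p ≤ A.length) :
    pocketStart (A ++ C) p = pocketStart A p := by
  rw [pocketStart, pocketStart, List.take_append_of_le_length hp]

theorem ps_split (A C : List ℕ) (k : ℕ) :
    pocketStart (A ++ C) (A.length + k) = pocketStart A A.length + pocketStart C k := by
  have h1 : (A ++ C).take (A.length + k) = A ++ C.take k := by
    rw [List.take_append]
    congr 1
    · exact List.take_of_length_le (by omega)
    · congr 1; omega
  rw [pocketStart, h1, List.map_append, List.sum_append, pocketStart, pocketStart,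
    List.take_length]

theorem ps_zero (C : List ℕ) : pocketStart C 0 = 0 := rfl

theorem ps_cons (a : ℕ) (C : List ℕ) (k : ℕ) :
    pocketStart (a :: C) (k + 1) = (a + 1) + pocketStart C k := by
  rw [pocketStart, pocketStart, List.take_succ_cons, List.map_cons, List.sum_cons]

theorem samePocket_iff (L : List ℕ) (a b : ℕ) :
    SamePocket L a b ↔ ∃ p, p < L.length ∧ pocketStart L p ≤ a ∧
      b ≤ pocketStart L p + L.getD p 0 + 1 := by
  unfold SamePocket
  simp only [Finset.mem_range, exists_prop]

/- ### the two-pocket window -/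

section window
variable (A B : List ℕ) (u v : ℕ)

theorem len_M : (A ++ u :: v :: B).length = A.length + (B.length + 2) := by
  simp [List.length_append]

theorem m_zero : pocketStart (A ++ u :: v :: B) A.length = pocketStart A A.length := by
  apply ps_low; exact le_refl _

theorem m_one : pocketStart (A ++ u :: v :: B) (A.length + 1)
    = pocketStart A A.length + (u + 1) := by
  rw [ps_split A (u :: v :: B) 1]
  have h1 : pocketStart (u :: v :: B) 1 = u + 1 := by
    rw [show (1 : ℕ) = 0 + 1 from rfl, ps_cons, ps_zero]
  omega

theorem m_two : pocketStart (A ++ u :: v :: B) (A.length + 2)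
    = pocketStart A A.length + (u + v + 2) := by
  rw [ps_split A (u :: v :: B) 2]
  have h1 : pocketStart (u :: v :: B) 2 = u + v + 2 := by
    rw [show (2 : ℕ) = 0 + 1 + 1 from rfl, ps_cons, ps_cons, ps_zero]
    omega
  omega

theorem m_high (k : ℕ) : pocketStart (A ++ u :: v :: B) (A.length + (2 + k))
    = pocketStart A A.length + (u + v + 2) + pocketStart B k := by
  rw [ps_split A (u :: v :: B) (2 + k)]
  have h1 : pocketStart (u :: v :: B) (2 + k) = u + v + 2 + pocketStart B k := by
    rw [show 2 + k = (k + 1) + 1 from by omega, ps_cons, ps_cons]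
    omega
  omega

theorem gd_zero : (A ++ u :: v :: B).getD A.length 0 = u := by
  rw [List.getD_append_right _ _ _ _ (le_refl _)]
  simp

theorem gd_one : (A ++ u :: v :: B).getD (A.length + 1) 0 = v := by
  rw [List.getD_append_right _ _ _ _ (by omega)]
  simp

theorem gd_high (k : ℕ) : (A ++ u :: v :: B).getD (A.length + (2 + k)) 0 = B.getD k 0 := by
  rw [List.getD_append_right _ _ _ _ (by omega)]
  have h2 : A.length + (2 + k) - A.length = k + 1 + 1 := by omega
  rw [h2]
  rfl

theorem gd_low {p : ℕ} (hp : p < A.length) (C : List ℕ) :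
    (A ++ C).getD p 0 = A.getD p 0 :=
  List.getD_append _ _ _ _ hp

/-- inside-window characterization -/
theorem W1 {a b : ℕ} (ha : pocketStart A A.length ≤ a) (hab : a < b)
    (hb : b ≤ pocketStart A A.length + u + v + 2) :
    SamePocket (A ++ u :: v :: B) a b ↔
      (b ≤ pocketStart A A.length + u + 1 ∨ pocketStart A A.length + u + 1 ≤ a) := by
  set sA := pocketStart A A.length with hsA
  rw [samePocket_iff]
  constructor
  · rintro ⟨p, hp, h1, h2⟩
    by_cases hp0 : p = A.length
    · subst hp0
      rw [m_zero, gd_zero] at h2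
      left; omega
    by_cases hp1 : p = A.length + 1
    · subst hp1
      rw [m_one] at h1
      right; omega
    rcases Nat.lt_or_ge p A.length with hc | hc
    · exfalso
      have hst := ps_step (A ++ u :: v :: B) (by rw [len_M]; omega : p < (A ++ u :: v :: B).length)
      have hmo : pocketStart (A ++ u :: v :: B) (p + 1) ≤ pocketStart (A ++ u :: v :: B) A.length :=
        ps_mono _ (by omega)
      rw [m_zero] at hmo
      omega
    · exfalso
      have hc2 : A.length + 2 ≤ p := by omega
      have hmo : pocketStart (A ++ u :: v :: B) (A.length + 2) ≤ pocketStart (A ++ u :: v :: B) p :=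
        ps_mono _ hc2
      rw [m_two] at hmo
      omega
  · rintro (h | h)
    · refine ⟨A.length, by rw [len_M]; omega, ?_, ?_⟩
      · rw [m_zero]; exact ha
      · rw [m_zero, gd_zero]; omega
    · refine ⟨A.length + 1, by rw [len_M]; omega, ?_, ?_⟩
      · rw [m_one]; omega
      · rw [m_one, gd_one]; omega

/-- edges that strictly cross the left window boundary are never in a pocket -/
theorem W2 {a b : ℕ} (h1 : a < pocketStart A A.length) (h2 : pocketStart A A.length < b) :
    ¬ SamePocket (A ++ u :: v :: B) a b := by
  rw [samePocket_iff]
  rintro ⟨p, hp, ha, hb⟩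
  rcases Nat.lt_or_ge p A.length with hc | hc
  · have hst := ps_step (A ++ u :: v :: B) (by rw [len_M]; omega : p < (A ++ u :: v :: B).length)
    have hmo : pocketStart (A ++ u :: v :: B) (p + 1) ≤ pocketStart (A ++ u :: v :: B) A.length :=
      ps_mono _ (by omega)
    rw [m_zero] at hmo
    omega
  · have hmo : pocketStart (A ++ u :: v :: B) A.length ≤ pocketStart (A ++ u :: v :: B) p :=
      ps_mono _ hc
    rw [m_zero] at hmo
    omega

/-- edges that strictly cross the right window boundary are never in a pocket -/
theorem W3 {a b : ℕ} (h1 : a < pocketStart A A.length + u + v + 2)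
    (h2 : pocketStart A A.length + u + v + 2 < b) :
    ¬ SamePocket (A ++ u :: v :: B) a b := by
  rw [samePocket_iff]
  rintro ⟨p, hp, ha, hb⟩
  rcases Nat.lt_or_ge p (A.length + 2) with hc | hc
  · have hst := ps_step (A ++ u :: v :: B) (by rw [len_M] at hp ⊢; omega : p < (A ++ u :: v :: B).length)
    have hmo : pocketStart (A ++ u :: v :: B) (p + 1) ≤ pocketStart (A ++ u :: v :: B) (A.length + 2) :=
      ps_mono _ (by omega)
    rw [m_two] at hmo
    omega
  · have hmo : pocketStart (A ++ u :: v :: B) (A.length + 2) ≤ pocketStart (A ++ u :: v :: B) p :=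
      ps_mono _ hc
    rw [m_two] at hmo
    omega

/-- low outside edges: membership transfers to the swapped list -/
theorem Wlow {a b : ℕ} (hb : b ≤ pocketStart A A.length) (hab : a < b) :
    SamePocket (A ++ u :: v :: B) a b → SamePocket (A ++ v :: u :: B) a b := by
  rw [samePocket_iff, samePocket_iff]
  rintro ⟨p, hp, h1, h2⟩
  have hc : p < A.length := by
    by_contra hc
    push_neg at hc
    have hmo : pocketStart (A ++ u :: v :: B) A.length ≤ pocketStart (A ++ u :: v :: B) p :=
      ps_mono _ hc
    rw [m_zero] at hmo
    omega
  refine ⟨p, by rw [len_M]; omega, ?_, ?_⟩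
  · rw [ps_low A _ (by omega)]
    rw [ps_low A _ (by omega)] at h1
    exact h1
  · rw [ps_low A _ (by omega), gd_low A hc]
    rw [ps_low A _ (by omega), gd_low A hc] at h2
    exact h2

/-- high outside edges: membership transfers to the swapped list -/
theorem Whigh {a b : ℕ} (ha : pocketStart A A.length + u + v + 2 ≤ a) (hab : a < b) :
    SamePocket (A ++ u :: v :: B) a b → SamePocket (A ++ v :: u :: B) a b := by
  rw [samePocket_iff, samePocket_iff]
  rintro ⟨p, hp, h1, h2⟩
  have hst := ps_step (A ++ u :: v :: B) (by exact hp)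
  have hc : A.length + 2 ≤ p := by
    by_contra hc
    push_neg at hc
    have hmo : pocketStart (A ++ u :: v :: B) (p + 1) ≤ pocketStart (A ++ u :: v :: B) (A.length + 2) :=
      ps_mono _ (by omega)
    rw [m_two] at hmo
    omega
  obtain ⟨k, rfl⟩ : ∃ k, p = A.length + (2 + k) := ⟨p - A.length - 2, by omega⟩
  have hlen : A.length + (2 + k) < (A ++ v :: u :: B).length := by
    rw [len_M] at hp ⊢; omega
  refine ⟨A.length + (2 + k), hlen, ?_, ?_⟩
  · rw [m_high]
    rw [m_high] at h1
    omega
  · rw [m_high, gd_high]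
    rw [m_high, gd_high] at h2
    omega

end window

theorem pocketGraphCount_swap_le (A B : List ℕ) (x y : ℕ) :
    pocketGraphCount (A ++ x :: y :: B) ≤ pocketGraphCount (A ++ y :: x :: B) := by
  set sA := pocketStart A A.length with hsA
  set t := sA + x + y + 2 with ht
  set n := numVerts (A ++ x :: y :: B) with hn
  have hlen1 := len_M A B x y
  have n_eq : numVerts (A ++ y :: x :: B) = n := by
    rw [hn]
    unfold numVerts pocketStart
    rw [List.take_length, List.take_length]
    simp only [List.map_append, List.sum_append, List.map_cons, List.sum_cons]
    omega
  have htn : t < n := by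
    rw [hn]
    unfold numVerts
    have h1 : pocketStart (A ++ x :: y :: B) (A.length + 2)
        ≤ pocketStart (A ++ x :: y :: B) ((A ++ x :: y :: B).length) :=
      ps_mono _ (by rw [hlen1]; omega)
    have h2 := m_two A B x y
    omega
  have hP₁ : ∀ e, AdmissibleEdge (A ++ x :: y :: B) e → e.1 + 2 ≤ e.2 ∧ e.2 < n :=
    fun e h => ⟨h.1, by rw [hn]; exact h.2.1⟩
  have hI : ∀ a b : ℕ, sA ≤ a → a + 2 ≤ b → b ≤ t →
      (AdmissibleEdge (A ++ x :: y :: B) (a, b) ↔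
        AdmissibleEdge (A ++ y :: x :: B) (sA + t - b, sA + t - a)) := by
    intro a b h1 h2 h3
    have w1 : SamePocket (A ++ x :: y :: B) a b ↔ (b ≤ sA + x + 1 ∨ sA + x + 1 ≤ a) :=
      W1 A B x y h1 (by omega) (by omega)
    have w2 : SamePocket (A ++ y :: x :: B) (sA + t - b) (sA + t - a) ↔
        ((sA + t - a) ≤ sA + y + 1 ∨ sA + y + 1 ≤ (sA + t - b)) :=
      W1 A B y x (by omega) (by omega) (by omega)
    have hsp : SamePocket (A ++ x :: y :: B) a b ↔
        SamePocket (A ++ y :: x :: B) (sA + t - b) (sA + t - a) := by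
      rw [w1, w2]; omega
    simp only [AdmissibleEdge]
    have hne := n_eq
    constructor
    · rintro ⟨g1, g2, g3⟩
      refine ⟨by omega, by omega, fun h => g3 (hsp.2 h)⟩
    · rintro ⟨g1, g2, g3⟩
      refine ⟨by omega, by omega, fun h => g3 (hsp.1 h)⟩
  have hL2 : ∀ a b : ℕ, a < sA → sA < b → b < t →
      AdmissibleEdge (A ++ y :: x :: B) (a, b) := by
    intro a b h1 h2 h3
    have hne := n_eq
    exact ⟨by omega, by omega, W2 A B y x h1 h2⟩
  have hR2 : ∀ a b : ℕ, sA < a → a < t → t < b → b < n →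
      AdmissibleEdge (A ++ y :: x :: B) (a, b) := by
    intro a b h1 h2 h3 h4
    have hne := n_eq
    exact ⟨by omega, by omega, W3 A B y x (by omega) (by omega)⟩
  have hO : ∀ a b : ℕ, a < b → b < n →
      (b ≤ sA ∨ t ≤ a ∨ (a ≤ sA ∧ t ≤ b)) →
      (AdmissibleEdge (A ++ x :: y :: B) (a, b) ↔
        AdmissibleEdge (A ++ y :: x :: B) (a, b)) := by
    intro a b hab hbn hsh
    have hsp : SamePocket (A ++ x :: y :: B) a b ↔ SamePocket (A ++ y :: x :: B) a b := by
      rcases hsh with h | h | h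
      · exact ⟨Wlow A B x y (by omega) hab, Wlow A B y x (by omega) hab⟩
      · exact ⟨Whigh A B x y (by omega) hab, Whigh A B y x (by omega) hab⟩
      · constructor <;> intro hs <;> exfalso
        · rcases Nat.lt_or_ge a sA with hc | hc
          · exact W2 A B x y hc (by omega) hs
          · rcases Nat.lt_or_ge t b with hd | hd
            · exact W3 A B x y (by omega) (by omega) hs
            · have hw := (W1 A B x y (by omega) (by omega) (by omega)).1 hs
              omega
        · rcases Nat.lt_or_ge a sA with hc | hc
          · exact W2 A B y x hc (by omega) hs
          · rcases Nat.lt_or_ge t b with hd | hd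
            · exact W3 A B y x (by omega) (by omega) hs
            · have hw := (W1 A B y x (by omega) (by omega) (by omega)).1 hs
              omega
    simp only [AdmissibleEdge]
    have hne := n_eq
    constructor
    · rintro ⟨g1, g2, g3⟩
      refine ⟨g1, by omega, fun h => g3 (hsp.2 h)⟩
    · rintro ⟨g1, g2, g3⟩
      refine ⟨g1, by omega, fun h => g3 (hsp.1 h)⟩
  unfold pocketGraphCount
  rw [← hn, n_eq]
  exact count_le (s := sA) (t := t) hP₁ htn hI hL2 hR2 hO

theorem pocketGraphCount_swap (A B : List ℕ) (x y : ℕ) :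
    pocketGraphCount (A ++ x :: y :: B) = pocketGraphCount (A ++ y :: x :: B) := by
  exact le_antisymm (pocketGraphCount_swap_le A B x y) (pocketGraphCount_swap_le A B y x)
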